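/- Every nonempty, connected, locally compact, locally path-connected, separable metric space X admits an efficient exhaustion by compacta: there exist compact subsets K_0 ⊆ K_1 ⊆ K_2 ⊆ ⋯ of X with ⋃_{i} K_i = X and K_i contained in the interior of K_{i+1} for every i, such that each K_i is connected and every connected component of X ∖ K_i has noncompact closure. -/

import Mathlib

open Set Topology

set_option linter.unusedSectionVars false
set_option linter.unusedVariables false



section Aux

variable {X : Type*} [TopologicalSpace X]

/-- Closure of a connected component of an open set meets the set only in the component. -/
lemma closure_compIn_inter_subset [LocallyConnectedSpace X] {U : Set X} (hU : IsOpen U)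
    {x : X} : closure (connectedComponentIn U x) ∩ U ⊆ connectedComponentIn U x := by
  rintro p ⟨hp, hpU⟩
  have hopen : IsOpen (connectedComponentIn U p) := hU.connectedComponentIn
  have hmem : p ∈ connectedComponentIn U p := mem_connectedComponentIn hpU
  obtain ⟨q, hq1, hq2⟩ := mem_closure_iff.mp hp _ hopen hmem
  have e1 := connectedComponentIn_eq hq1
  have e2 := connectedComponentIn_eq hq2
  rw [e2, ← e1]
  exact hmem

lemma closure_compIn_subset [LocallyConnectedSpace X] {U : Set X} (hU : IsOpen U)
    {x : X} : closure (connectedComponentIn U x) ⊆ connectedComponentIn U x ∪ Uᶜ := by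
  intro p hp
  by_cases hpU : p ∈ U
  · exact Or.inl (closure_compIn_inter_subset hU ⟨hp, hpU⟩)
  · exact Or.inr hpU

/-- If the space is connected and `U ≠ univ` is open, the closure of any connected
component of `U` meets `Uᶜ`. -/
lemma compIn_touches [LocallyConnectedSpace X] [ConnectedSpace X] {U : Set X} (hU : IsOpen U)
    (hne : Uᶜ.Nonempty) {x : X} (hx : x ∈ U) :
    (closure (connectedComponentIn U x) ∩ Uᶜ).Nonempty := by
  by_contra h
  rw [Set.not_nonempty_iff_eq_empty] at h
  have hsub : closure (connectedComponentIn U x) ⊆ U := by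
    intro p hp
    by_contra hpU
    have : p ∈ closure (connectedComponentIn U x) ∩ Uᶜ := ⟨hp, hpU⟩
    rw [h] at this
    exact this
  have hclosed : IsClosed (connectedComponentIn U x) := by
    have : closure (connectedComponentIn U x) ⊆ connectedComponentIn U x := fun p hp =>
      closure_compIn_inter_subset hU ⟨hp, hsub hp⟩
    exact isClosed_of_closure_subset this
  have hopen : IsOpen (connectedComponentIn U x) := hU.connectedComponentIn
  have hclopen : IsClopen (connectedComponentIn U x) := ⟨hclosed, hopen⟩
  rcases isClopen_iff.mp hclopen with h0 | h1
  · exact (connectedComponentIn_nonempty_iff.mpr hx).ne_empty h0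
  · obtain ⟨y, hy⟩ := hne
    apply hy
    have : y ∈ connectedComponentIn U x := h1 ▸ Set.mem_univ y
    exact connectedComponentIn_subset U x this

end Aux


section Hat

variable {X : Type*} [TopologicalSpace X] [LocallyConnectedSpace X]

/-- `hatSet K` is `K` together with all components of `Kᶜ` having compact closure;
defined as the complement of the union of the unbounded components. -/
def hatSet (K : Set X) : Set X :=
  (⋃ x ∈ {x | x ∈ Kᶜ ∧ ¬ IsCompact (closure (connectedComponentIn Kᶜ x))},
    connectedComponentIn Kᶜ x)ᶜ

variable {K : Set X}

lemma mem_compl_hatSet {y : X} :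
    y ∈ (hatSet K)ᶜ ↔ y ∈ Kᶜ ∧ ¬ IsCompact (closure (connectedComponentIn Kᶜ y)) := by
  rw [hatSet, compl_compl, mem_iUnion₂]
  constructor
  · rintro ⟨x, ⟨hxK, hxnc⟩, hy⟩
    have e := connectedComponentIn_eq hy
    exact ⟨connectedComponentIn_subset _ _ hy, by rw [← e]; exact hxnc⟩
  · rintro ⟨hyK, hync⟩
    exact ⟨y, ⟨hyK, hync⟩, mem_connectedComponentIn hyK⟩

lemma subset_hatSet : K ⊆ hatSet K := by
  intro y hy
  rw [hatSet, mem_compl_iff, mem_iUnion₂]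
  rintro ⟨x, _, hyx⟩
  exact (connectedComponentIn_subset _ _ hyx) hy

lemma isClosed_hatSet (hK : IsClosed K) : IsClosed (hatSet K) := by
  rw [hatSet]
  apply IsOpen.isClosed_compl
  exact isOpen_biUnion fun x _ => hK.isOpen_compl.connectedComponentIn

lemma bounded_comp_subset_hatSet {y : X} (hy : y ∈ Kᶜ)
    (hc : IsCompact (closure (connectedComponentIn Kᶜ y))) :
    connectedComponentIn Kᶜ y ⊆ hatSet K := by
  intro u hu
  by_contra hns
  obtain ⟨huK, hunc⟩ := mem_compl_hatSet.mp hns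
  have e := connectedComponentIn_eq hu
  rw [← e] at hunc
  exact hunc hc

end Hat

section Hat2
variable {X : Type*} [TopologicalSpace X] [T2Space X] [LocallyCompactSpace X]
  [LocallyConnectedSpace X] [ConnectedSpace X] {K : Set X}

lemma isCompact_hatSet (hK : IsCompact K) (hKne : K.Nonempty) : IsCompact (hatSet K) := by
  classical
  obtain ⟨L, hL, hKL⟩ := exists_compact_superset hK
  have hLc : IsClosed L := hL.isClosed
  have hUopen : IsOpen Kᶜ := hK.isClosed.isOpen_compl
  -- the frontier of L is compact and contained in Kᶜ
  have hfrsub : frontier L ⊆ Kᶜ := by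
    intro z hz
    intro hzK
    exact hz.2 (hKL hzK)
  have hfrcpt : IsCompact (frontier L) :=
    hL.of_isClosed_subset isClosed_frontier (by
      rw [frontier_eq_closure_inter_closure, hLc.closure_eq]
      exact inter_subset_left)
  -- finitely many components cover the frontier
  have hcover : frontier L ⊆ ⋃ z ∈ frontier L, connectedComponentIn Kᶜ z := fun z hz =>
    mem_biUnion hz (mem_connectedComponentIn (hfrsub hz))
  obtain ⟨t, htsub, htfin, htcov⟩ := hfrcpt.elim_finite_subcover_image
    (fun z _ => hUopen.connectedComponentIn) hcover
  -- the compact set that will contain hatSet K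
  set D : X → Set X := fun z =>
    if IsCompact (closure (connectedComponentIn Kᶜ z)) then closure (connectedComponentIn Kᶜ z)
    else ∅ with hD
  have hDcpt : ∀ z, IsCompact (D z) := by
    intro z
    simp only [hD]
    split
    · assumption
    · exact isCompact_empty
  have hM : IsCompact (L ∪ ⋃ z ∈ t, D z) :=
    hL.union (htfin.isCompact_biUnion fun z _ => hDcpt z)
  apply hM.of_isClosed_subset (isClosed_hatSet hK.isClosed)
  intro y hy
  by_cases hyL : y ∈ L
  · exact Or.inl hyL
  by_cases hyK : y ∈ K
  · exact Or.inl (interior_subset (hKL hyK))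
  -- y is in a bounded component C that is not contained in L
  have hyKc : y ∈ Kᶜ := hyK
  have hybd : IsCompact (closure (connectedComponentIn Kᶜ y)) := by
    by_contra hnc
    exact (mem_compl_hatSet.mpr ⟨hyKc, hnc⟩) hy
  set C := connectedComponentIn Kᶜ y with hCdef
  -- C meets the interior of L
  obtain ⟨p, hp1, hp2⟩ := compIn_touches hUopen ⟨hKne.some, by simpa using hKne.some_mem⟩ hyKc
  have hpIntL : p ∈ interior L := hKL (by simpa using hp2)
  obtain ⟨a, haI, haC⟩ := mem_closure_iff.mp hp1 _ isOpen_interior hpIntL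
  -- C meets the frontier of L
  have hCfr : (C ∩ frontier L).Nonempty := by
    by_contra hemp
    rw [not_nonempty_iff_eq_empty] at hemp
    have hCsub : C ⊆ interior L ∪ Lᶜ := by
      intro u hu
      by_cases huL : u ∈ L
      · by_cases huI : u ∈ interior L
        · exact Or.inl huI
        · exfalso
          have : u ∈ C ∩ frontier L := ⟨hu, by rw [frontier_eq_closure_inter_closure, hLc.closure_eq]; exact ⟨huL, by simpa [interior_compl] using huI⟩⟩
          rw [hemp] at this
          exact this
      · exact Or.inr huL
    have hpre : IsPreconnected C := isPreconnected_connectedComponentIn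
    obtain ⟨q, hqC, hqI, hqL⟩ := hpre (interior L) Lᶜ isOpen_interior hLc.isOpen_compl hCsub
      ⟨a, haC, haI⟩ ⟨y, mem_connectedComponentIn hyKc, hyL⟩
    exact hqL (interior_subset hqI)
  obtain ⟨w, hwC, hwfr⟩ := hCfr
  obtain ⟨z, hzt, hwz⟩ := mem_iUnion₂.mp (htcov hwfr)
  -- the component of z equals C
  have e1 : connectedComponentIn Kᶜ z = connectedComponentIn Kᶜ w := connectedComponentIn_eq hwz
  have e2 : connectedComponentIn Kᶜ y = connectedComponentIn Kᶜ w := connectedComponentIn_eq hwC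
  have ezy : connectedComponentIn Kᶜ z = C := by rw [e1, ← e2]
  right
  apply mem_biUnion hzt
  rw [hD]
  simp only [ezy]
  rw [if_pos hybd]
  exact subset_closure (mem_connectedComponentIn hyKc)

lemma isConnected_hatSet (hK : IsCompact K) (hKne : K.Nonempty) (hKc : IsPreconnected K) :
    IsConnected (hatSet K) := by
  have hUopen : IsOpen Kᶜ := hK.isClosed.isOpen_compl
  obtain ⟨x0, hx0⟩ := hKne
  refine ⟨⟨x0, subset_hatSet hx0⟩, ?_⟩
  apply isPreconnected_of_forall x0
  intro y hy
  by_cases hyK : y ∈ K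
  · exact ⟨K, subset_hatSet, hx0, hyK, hKc⟩
  · have hyKc : y ∈ Kᶜ := hyK
    have hybd : IsCompact (closure (connectedComponentIn Kᶜ y)) := by
      by_contra hnc
      exact (mem_compl_hatSet.mpr ⟨hyKc, hnc⟩) hy
    refine ⟨K ∪ closure (connectedComponentIn Kᶜ y), ?_, Or.inl hx0,
      Or.inr (subset_closure (mem_connectedComponentIn hyKc)), ?_⟩
    · apply union_subset subset_hatSet
      intro u hu
      rcases closure_compIn_subset hUopen hu with h | h
      · exact bounded_comp_subset_hatSet hyKc hybd h
      · exact subset_hatSet (by simpa using h)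
    · obtain ⟨p, hp1, hp2⟩ := compIn_touches hUopen ⟨x0, by simpa using hx0⟩ hyKc
      exact IsPreconnected.union p (by simpa using hp2) hp1 hKc
        isPreconnected_connectedComponentIn.closure

lemma hatSet_efficient (hK : IsCompact K) {x : X} (hx : x ∈ (hatSet K)ᶜ) :
    ¬ IsCompact (closure (connectedComponentIn (hatSet K)ᶜ x)) := by
  obtain ⟨hxK, hxnc⟩ := mem_compl_hatSet.mp hx
  have key : connectedComponentIn (hatSet K)ᶜ x = connectedComponentIn Kᶜ x := by
    apply Subset.antisymm
    · apply IsPreconnected.subset_connectedComponentIn isPreconnected_connectedComponentIn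
        (mem_connectedComponentIn hx)
      exact (connectedComponentIn_subset _ _).trans (compl_subset_compl.mpr subset_hatSet)
    · apply IsPreconnected.subset_connectedComponentIn isPreconnected_connectedComponentIn
        (mem_connectedComponentIn hxK)
      intro u hu
      have e := connectedComponentIn_eq hu
      refine mem_compl_hatSet.mpr ⟨connectedComponentIn_subset _ _ hu, ?_⟩
      rw [← e]
      exact hxnc
  rw [key]
  exact hxnc

end Hat2

section Connectize
variable {X : Type*} [TopologicalSpace X] [Nonempty X] [ConnectedSpace X]
  [LocallyCompactSpace X] [LocallyPathConnectedSpace X] [T2Space X]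

lemma exists_connected_compact_superset {C : Set X} (hC : IsCompact C) :
    ∃ K : Set X, IsCompact K ∧ IsConnected K ∧ C ⊆ K := by
  have hpcs : PathConnectedSpace X := pathConnectedSpace_iff_connectedSpace.mpr ‹_›
  obtain x0 : X := Nonempty.some ‹_›
  have h : ∀ x : X, ∃ U : Set X, IsOpen U ∧ x ∈ U ∧ IsCompact (closure U) ∧
      IsPathConnected U := by
    intro x
    obtain ⟨V, hVc, hVn⟩ := exists_compact_mem_nhds x
    have hxI : x ∈ interior V := mem_interior_iff_mem_nhds.mpr hVn
    refine ⟨pathComponentIn (interior V) x, isOpen_interior.pathComponentIn x,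
      mem_pathComponentIn_self hxI, ?_, isPathConnected_pathComponentIn hxI⟩
    apply hVc.of_isClosed_subset isClosed_closure
    calc closure (pathComponentIn (interior V) x) ⊆ closure V :=
          closure_mono (pathComponentIn_subset.trans interior_subset)
      _ = V := hVc.isClosed.closure_eq
  choose U hUo hUx hUcl hUpc using h
  obtain ⟨t, ht⟩ := hC.elim_finite_subcover U hUo fun x hx => mem_iUnion.mpr ⟨x, hUx x⟩
  set f : X → Set X := fun x => closure (U x) ∪ range (PathConnectedSpace.somePath x0 x)
    with hf
  have hfconn : ∀ x, IsPreconnected (f x) := by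
    intro x
    apply IsPreconnected.union x (subset_closure (hUx x))
      (mem_range.mpr ⟨1, (PathConnectedSpace.somePath x0 x).target⟩)
    · exact (hUpc x).isConnected.isPreconnected.closure
    · exact (isPreconnected_range (PathConnectedSpace.somePath x0 x).continuous)
  have hfcpt : ∀ x, IsCompact (f x) := fun x =>
    (hUcl x).union (isCompact_range (PathConnectedSpace.somePath x0 x).continuous)
  have hx0f : ∀ x, x0 ∈ f x := fun x => Or.inr ⟨0, (PathConnectedSpace.somePath x0 x).source⟩
  refine ⟨{x0} ∪ ⋃ x ∈ t, f x, ?_, ⟨⟨x0, Or.inl rfl⟩, ?_⟩, ?_⟩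
  · exact isCompact_singleton.union (t.finite_toSet.isCompact_biUnion fun x _ => hfcpt x)
  · apply isPreconnected_of_forall x0
    rintro y (hy | hy)
    · exact ⟨{x0}, subset_union_left, rfl, hy, isPreconnected_singleton⟩
    · obtain ⟨x, hxt, hyx⟩ := mem_iUnion₂.mp hy
      exact ⟨f x, fun u hu => Or.inr (mem_biUnion hxt hu), hx0f x, hyx, hfconn x⟩
  · intro c hc
    obtain ⟨x, hxt, hcx⟩ := mem_iUnion₂.mp (ht hc)
    exact Or.inr (mem_biUnion hxt (Or.inl (subset_closure hcx)))

end Connectize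

section Step
variable {X : Type*} [TopologicalSpace X] [Nonempty X] [ConnectedSpace X]
  [LocallyCompactSpace X] [LocallyPathConnectedSpace X] [T2Space X]

lemma exists_efficient_step {C A : Set X} (hC : IsCompact C) (hA : IsCompact A) :
    ∃ K : Set X, IsCompact K ∧ IsConnected K ∧
      (∀ x ∈ Kᶜ, ¬ IsCompact (closure (connectedComponentIn Kᶜ x))) ∧
      C ∪ A ⊆ interior K := by
  obtain ⟨L, hL, hsub⟩ := exists_compact_superset (hC.union hA)
  obtain ⟨K1, hK1c, hK1conn, hLK1⟩ := exists_connected_compact_superset hL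
  refine ⟨hatSet K1, isCompact_hatSet hK1c hK1conn.nonempty,
    isConnected_hatSet hK1c hK1conn.nonempty hK1conn.isPreconnected,
    fun x hx => hatSet_efficient hK1c hx, ?_⟩
  exact hsub.trans (interior_mono (hLK1.trans subset_hatSet))

end Step

/-- Every nonempty, connected, locally compact, locally path-connected, separable
metric space admits an efficient exhaustion by compacta: compact sets
`K 0 ⊆ K 1 ⊆ ⋯` with union `X`, each contained in the interior of the next, each
connected, and such that every connected component of the complement of each `K i`
has noncompact closure. -/
theorem exists_efficient_exhaustion {X : Type*} [MetricSpace X]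
    [TopologicalSpace.SeparableSpace X] [Nonempty X] [ConnectedSpace X]
    [LocallyCompactSpace X] [LocallyPathConnectedSpace X] :
    ∃ K : ℕ → Set X,
      (∀ i, IsCompact (K i)) ∧
      (∀ i, K i ⊆ K (i + 1)) ∧
      (∀ i, K i ⊆ interior (K (i + 1))) ∧
      (⋃ i, K i) = Set.univ ∧
      (∀ i, IsConnected (K i)) ∧
      (∀ i, ∀ x ∈ (K i)ᶜ, ¬ IsCompact (closure (connectedComponentIn ((K i)ᶜ) x))) := by
  classical
  haveI : SecondCountableTopology X := UniformSpace.secondCountable_of_separable X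
  haveI : SigmaCompactSpace X := inferInstance
  set A := CompactExhaustion.choice X with hA
  have step : ∀ C : Set X, IsCompact C → ∀ n : ℕ, ∃ K : Set X, IsCompact K ∧ IsConnected K ∧
      (∀ x ∈ Kᶜ, ¬ IsCompact (closure (connectedComponentIn Kᶜ x))) ∧
      C ∪ A n ⊆ interior K := fun C hC n => exists_efficient_step hC (A.isCompact n)
  choose! F hFcpt hFconn hFeff hFsub using step
  set seq : ℕ → Set X := fun n => Nat.rec (F ∅ 0) (fun n prev => F prev (n + 1)) n with hseq
  have hscpt : ∀ n, IsCompact (seq n) := by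
    intro n
    induction n with
    | zero => exact hFcpt ∅ isCompact_empty 0
    | succ n ih => exact hFcpt (seq n) ih (n + 1)
  have hssub : ∀ n, seq n ∪ A (n + 1) ⊆ interior (seq (n + 1)) := fun n =>
    hFsub (seq n) (hscpt n) (n + 1)
  refine ⟨seq, hscpt, ?_, ?_, ?_, ?_, ?_⟩
  · exact fun i => (subset_union_left.trans (hssub i)).trans interior_subset
  · exact fun i => subset_union_left.trans (hssub i)
  · apply eq_univ_of_forall
    intro x
    obtain ⟨n, hn⟩ : ∃ n, x ∈ A n := by
      have := A.iUnion_eq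
      rw [eq_univ_iff_forall] at this
      exact mem_iUnion.mp (this x)
    exact mem_iUnion.mpr ⟨n + 1, interior_subset (hssub n (Or.inr (A.subset_succ n hn)))⟩
  · intro i
    cases i with
    | zero => exact hFconn ∅ isCompact_empty 0
    | succ n => exact hFconn (seq n) (hscpt n) (n + 1)
  · intro i
    cases i with
    | zero => exact hFeff ∅ isCompact_empty 0
    | succ n => exact hFeff (seq n) (hscpt n) (n + 1)
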